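/- Let κ be an inaccessible cardinal with 2^{<κ} = κ. The forcing K_κ (the poset adding a κ-regressive κ-Kurepa tree) is κ^+-cc. -/

import Mathlib

set_option autoImplicit false

noncomputable section

open FirstOrder Language Set

universe u

/-! ## The language of set theory (one binary relation, read as membership) -/

/-- We read the binary relation of `Language.order` as set-membership. -/
instance ZFSet.instLE : LE ZFSet.{0} := ⟨fun x y => x ∈ y⟩

instance zfStructure : Language.order.Structure ZFSet.{0} := Language.orderStructure ZFSet


instance subclassStructure (W : Set ZFSet.{0}) : Language.order.Structure W :=
  Language.orderStructure W

/-! ## Von Neumann ordinals inside `ZFSet` -/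

/-- The von Neumann ordinal associated to an ordinal. -/
noncomputable def ordZF (o : Ordinal.{0}) : ZFSet.{0} :=
  ZFSet.range (fun i : o.ToType => ordZF ((Ordinal.ToType.mk (o := o)).symm i).1)
termination_by o
decreasing_by exact ((Ordinal.ToType.mk (o := o)).symm i).2

/-- `V_θ` as a class of sets, relative to an ambient class `W`. -/
def VsetIn (W : Set ZFSet.{0}) (θ : Ordinal.{0}) : Set ZFSet.{0} :=
  {x | x ∈ W ∧ x.rank < θ}

/-- `V_θ` as a class of sets. -/
def Vset (θ : Ordinal.{0}) : Set ZFSet.{0} := VsetIn Set.univ θ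

/-- Code a set of ordinals, bounded by `b`, as a `ZFSet`. -/
def zfOfSet (X : Set Ordinal.{0}) (b : Ordinal.{0}) : ZFSet.{0} :=
  ZFSet.sep (fun z => ∃ α ∈ X, z = ordZF α) (ordZF b)

/-! ## Clubs and stationary sets -/

/-- `C` is closed and unbounded in `λ`. -/
def IsClubIn (C : Set Ordinal.{0}) (l : Ordinal.{0}) : Prop :=
  (∀ x ∈ C, x < l) ∧ (∀ a < l, ∃ b ∈ C, a ≤ b) ∧
    (∀ a < l, (∀ b < a, ∃ c ∈ C, b < c ∧ c < a) → (0 < a) → a ∈ C)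

/-- `S` is stationary in `λ`. -/
def IsStationaryIn (S : Set Ordinal.{0}) (l : Ordinal.{0}) : Prop :=
  ∀ C, IsClubIn C l → (S ∩ C).Nonempty

/-- An ordinal is (the ordinal of) an inaccessible cardinal. -/
def InaccOrd (o : Ordinal.{0}) : Prop :=
  o.card.IsInaccessible ∧ o.card.ord = o

/-- An ordinal is (the ordinal of) a cardinal. -/
def IsCardOrd (o : Ordinal.{0}) : Prop := o.card.ord = o

/-- The cardinal successor of (the cardinality of) an ordinal, as an ordinal. -/
def cardSucc (o : Ordinal.{0}) : Ordinal.{0} := (Order.succ o.card).ord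

/-- A Mahlo cardinal (as an ordinal). -/
def MahloOrd (o : Ordinal.{0}) : Prop :=
  InaccOrd o ∧ IsStationaryIn {δ | δ < o ∧ InaccOrd δ} o

/-- `θ` is a successor inaccessible: inaccessible with an inaccessible predecessor
and no inaccessibles strictly in between. -/
def SuccInacc (θ : Ordinal.{0}) : Prop :=
  InaccOrd θ ∧ ∃ μ < θ, InaccOrd μ ∧ ∀ ν, μ < ν → ν < θ → ¬ InaccOrd ν

/-- `a` is a limit ordinal. -/
def IsLimitOrd (a : Ordinal.{0}) : Prop := 0 < a ∧ ∀ b < a, b + 1 < a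

/-! ## The Lévy hierarchy of formulas (with `Σ₀ = ` quantifier-free) -/

mutual
  /-- `Σ_n` formulas (simplified Lévy hierarchy over quantifier-free formulas). -/
  inductive IsSigmaF (L : Language) (α : Type u) : ℕ → ∀ {n : ℕ}, L.BoundedFormula α n → Prop
    | qf {m} {n : ℕ} {φ : L.BoundedFormula α n} : φ.IsQF → IsSigmaF L α m φ → IsSigmaF L α m φ
    | of_qf {n : ℕ} {φ : L.BoundedFormula α n} : φ.IsQF → IsSigmaF L α 0 φ
    | mono {m} {n : ℕ} {φ : L.BoundedFormula α n} : IsSigmaF L α m φ → IsSigmaF L α (m+1) φ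
    | ex {m} {n : ℕ} {φ : L.BoundedFormula α (n+1)} :
        IsSigmaF L α (m+1) φ.ex → IsSigmaF L α (m+1) φ.ex
    | step {m} {n : ℕ} {φ : L.BoundedFormula α (n+1)} :
        IsPiF L α m φ → IsSigmaF L α (m+1) φ.ex

  /-- `Π_n` formulas. -/
  inductive IsPiF (L : Language) (α : Type u) : ℕ → ∀ {n : ℕ}, L.BoundedFormula α n → Prop
    | of_qf {n : ℕ} {φ : L.BoundedFormula α n} : φ.IsQF → IsPiF L α 0 φ
    | mono {m} {n : ℕ} {φ : L.BoundedFormula α n} : IsPiF L α m φ → IsPiF L α (m+1) φ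
    | step {m} {n : ℕ} {φ : L.BoundedFormula α (n+1)} :
        IsSigmaF L α m φ → IsPiF L α (m+1) φ.all
end

/-- `θ ∈ C^{(n)}` relative to an ambient class `W` : `V_θ ∩ W` is a
`Σ_n`-elementary substructure of `W`. -/
def InCC (W : Set ZFSet.{0}) (n : ℕ) (θ : Ordinal.{0}) : Prop :=
  ∀ (k : ℕ) (φ : Language.order.Formula (Fin k)),
    (IsSigmaF Language.order (Fin k) n φ ∨ IsPiF Language.order (Fin k) n φ) →
    ∀ v : Fin k → (VsetIn W θ),
      φ.Realize v ↔ φ.Realize (fun i => (⟨(v i).1, (v i).2.1⟩ : W))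

/-! ## Elementary embeddings of (relative) classes -/

/-- An elementary embedding `j : W → M` where `M ⊆ W` is a transitive subclass. -/
structure ClassEmbOver (W : Set ZFSet.{0}) where
  M : Set ZFSet.{0}
  M_sub : M ⊆ W
  M_trans : ∀ x ∈ M, ∀ y : ZFSet, y ∈ x → y ∈ M
  j : ZFSet.{0} → ZFSet.{0}
  maps : ∀ x, x ∈ W → j x ∈ M
  elem : ∀ (k : ℕ) (φ : Language.order.Formula (Fin k)) (v : Fin k → W),
    φ.Realize v ↔ φ.Realize (fun i => (⟨j (v i).1, maps _ (v i).2⟩ : M))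

variable {W : Set ZFSet.{0}}

/-- `j` has critical point `κ`. -/
def critAt (e : ClassEmbOver W) (κ : Ordinal.{0}) : Prop :=
  (∀ α < κ, e.j (ordZF α) = ordZF α) ∧ e.j (ordZF κ) ≠ ordZF κ

/-- The image `j(κ)` of an ordinal, as an ordinal. -/
def targ (e : ClassEmbOver W) (κ : Ordinal.{0}) : Ordinal.{0} := (e.j (ordZF κ)).rank

/-- `M^λ ∩ W ⊆ M`. -/
def SeqClosed (e : ClassEmbOver W) (l : Ordinal.{0}) : Prop :=
  ∀ f y : ZFSet.{0}, f ∈ W → ZFSet.IsFunc (ordZF l) y f →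
    (∀ z w : ZFSet, z.pair w ∈ f → w ∈ e.M) → f ∈ e.M

/-- `V_θ ⊆ M`. -/
def VsubM (e : ClassEmbOver W) (θ : Ordinal.{0}) : Prop :=
  ∀ x : ZFSet, x ∈ W → x.rank < θ → x ∈ e.M

/-- A `ZFSet` codes a set of ordinals below `l`. -/
def zfSubsetOrd (s : ZFSet.{0}) (l : Ordinal.{0}) : Prop :=
  ∀ x ∈ s, ∃ α < l, x = ordZF α

/-- The set of ordinals coded by a `ZFSet`. -/
def toOrdSet (s : ZFSet.{0}) : Set Ordinal.{0} := {α | ordZF α ∈ s}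

/-- `M` computes stationary subsets of `l` correctly. -/
def StatCorrect (e : ClassEmbOver W) (l : Ordinal.{0}) : Prop :=
  ∀ s ∈ e.M, zfSubsetOrd s l →
    (IsStationaryIn (toOrdSet s) l ↔
      ∀ C ∈ e.M, zfSubsetOrd C l → IsClubIn (toOrdSet C) l →
        (toOrdSet s ∩ toOrdSet C).Nonempty)

/-! ## Large cardinal notions -/

/-- `κ` is tall with target `θ` (relative to `W`). -/
def TallWithTarget (W : Set ZFSet.{0}) (κ θ : Ordinal.{0}) : Prop :=
  ∃ e : ClassEmbOver W, critAt e κ ∧ SeqClosed e κ ∧ targ e κ = θ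

/-- `κ` is `λ`-supercompact. -/
def IsLamSC (W : Set ZFSet.{0}) (κ l : Ordinal.{0}) : Prop :=
  ∃ e : ClassEmbOver W, critAt e κ ∧ l < targ e κ ∧ SeqClosed e l

/-- `κ` is supercompact. -/
def IsSC (W : Set ZFSet.{0}) (κ : Ordinal.{0}) : Prop :=
  ∀ l, κ < l → IsLamSC W κ l

/-- `κ` is `λ`-`C^{(n)}`-supercompact. -/
def IsLamCnSC (W : Set ZFSet.{0}) (n : ℕ) (κ l : Ordinal.{0}) : Prop :=
  ∃ e : ClassEmbOver W, critAt e κ ∧ l < targ e κ ∧ SeqClosed e l ∧ InCC W n (targ e κ)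

/-- `κ` is `C^{(n)}`-supercompact. -/
def IsCnSC (W : Set ZFSet.{0}) (n : ℕ) (κ : Ordinal.{0}) : Prop :=
  ∀ l, κ < l → IsLamCnSC W n κ l

/-- `κ` is enhanced `C^{(n)}`-tall: for every `λ > κ` there is `θ ∈ C^{(n)}` of
cofinality `> λ` such that `κ` is tall with target `θ`. -/
def EnhancedCnTall (W : Set ZFSet.{0}) (n : ℕ) (κ : Ordinal.{0}) : Prop :=
  ∀ l, κ < l → ∃ θ, InCC W n θ ∧ l < θ.cof.ord ∧ TallWithTarget W κ θ

/-- `κ` is superstrong with target `θ`. -/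
def SuperstrongTarget (W : Set ZFSet.{0}) (κ θ : Ordinal.{0}) : Prop :=
  ∃ e : ClassEmbOver W, critAt e κ ∧ targ e κ = θ ∧ VsubM e θ

/-- `κ` is enhanced superstrong with target `θ`: additionally `M^κ ⊆ M`. -/
def EnhSuperstrongTarget (W : Set ZFSet.{0}) (κ θ : Ordinal.{0}) : Prop :=
  ∃ e : ClassEmbOver W, critAt e κ ∧ targ e κ = θ ∧ VsubM e θ ∧ SeqClosed e κ

/-- `κ` is stationary-correct superstrong with target `θ`. -/
def StatCorrectSuperstrong (W : Set ZFSet.{0}) (κ θ : Ordinal.{0}) : Prop :=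
  ∃ e : ClassEmbOver W, critAt e κ ∧ targ e κ = θ ∧ VsubM e θ ∧ StatCorrect e θ

/-! ## Axiom 𝒜 -/

/-- Axiom `𝒜`, relative to `W`. -/
def AxiomA (W : Set ZFSet.{0}) : Prop :=
  (∀ α : Ordinal, ∃ κ, α < κ ∧ InaccOrd κ) ∧
  (∀ δ l, StatCorrectSuperstrong W δ l → InaccOrd l →
    ∀ θ, δ < θ → θ < l → SuccInacc θ → TallWithTarget W δ θ)

/-- Elementary embedding between two set-sized structures `⟨A,∈⟩ → ⟨B,∈⟩`. -/
structure SetEmb (A B : Set ZFSet.{0}) where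
  j : ZFSet.{0} → ZFSet.{0}
  maps : ∀ x, x ∈ A → j x ∈ B
  elem : ∀ (k : ℕ) (φ : Language.order.Formula (Fin k)) (v : Fin k → A),
    φ.Realize v ↔ φ.Realize (fun i => (⟨j (v i).1, maps _ (v i).2⟩ : B))

/-- critical point for set embeddings. -/
def setCritAt (A B : Set ZFSet.{0}) (e : SetEmb A B) (κ : Ordinal.{0}) : Prop :=
  (∀ α < κ, e.j (ordZF α) = ordZF α) ∧ e.j (ordZF κ) ≠ ordZF κ

/-- `j(κ)` for set embeddings. -/
def setTarg (A B : Set ZFSet.{0}) (e : SetEmb A B) (κ : Ordinal.{0}) : Ordinal.{0} :=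
  (e.j (ordZF κ)).rank


/-! ## Trees with a level function -/

/-- A tree on a set of ordinals, presented with a level function. -/
structure LvTree : Type 1 where
  node : Set Ordinal.{0}
  lt : Ordinal.{0} → Ordinal.{0} → Prop
  level : Ordinal.{0} → Ordinal.{0}
  lt_mem : ∀ {x y}, lt x y → x ∈ node ∧ y ∈ node
  lt_trans' : ∀ {x y z}, lt x y → lt y z → lt x z
  level_mono : ∀ {x y}, lt x y → level x < level y
  pred_linear : ∀ {x y z}, lt y x → lt z x → lt y z ∨ y = z ∨ lt z y
  pred_ex : ∀ x ∈ node, ∀ β < level x, ∃ y, lt y x ∧ level y = β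

/-- The `β`-th level of the tree. -/
def LvTree.lvl (T : LvTree) (β : Ordinal.{0}) : Set Ordinal.{0} :=
  {x | x ∈ T.node ∧ T.level x = β}

/-- The nodes of level `< β`. -/
def LvTree.below (T : LvTree) (β : Ordinal.{0}) : Set Ordinal.{0} :=
  {x | x ∈ T.node ∧ T.level x < β}

/-- Two tree-incomparable nodes. -/
def LvTree.Incomp (T : LvTree) (x y : Ordinal.{0}) : Prop :=
  ¬ T.lt x y ∧ ¬ T.lt y x ∧ x ≠ y

/-- There is a regressive map on the `δ`-th level: `f x <_T x` and for incomparable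
`x, y` every common predecessor lies below both `f x` and `f y`
(i.e. `x ∧ y <_T f x, f y`). -/
def RegressiveAt (T : LvTree) (δ : Ordinal.{0}) : Prop :=
  ∃ f : Ordinal.{0} → Ordinal.{0},
    (∀ x ∈ T.lvl δ, T.lt (f x) x) ∧
    (∀ x ∈ T.lvl δ, ∀ y ∈ T.lvl δ, T.Incomp x y →
      ∀ z, T.lt z x → T.lt z y → T.lt z (f x) ∧ T.lt z (f y))

/-- A chain in the tree. -/
def IsTreeChain (T : LvTree) (b : Set Ordinal.{0}) : Prop :=
  b ⊆ T.node ∧ ∀ x ∈ b, ∀ y ∈ b, T.lt x y ∨ x = y ∨ T.lt y x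

/-- A branch: a maximal chain. -/
def IsTreeBranch (T : LvTree) (b : Set Ordinal.{0}) : Prop :=
  IsTreeChain T b ∧ ∀ b', IsTreeChain T b' → b ⊆ b' → b = b'

/-- A cofinal branch of a tree of height `κ`. -/
def CofBranch (T : LvTree) (κ : Ordinal.{0}) (b : Set Ordinal.{0}) : Prop :=
  IsTreeBranch T b ∧ ∀ β < κ, ∃ x ∈ b, T.level x = β

/-- A `κ`-regressive `κ`-Kurepa tree on `κ`. -/
def KurepaTree (κ : Ordinal.{0}) (T : LvTree) : Prop :=
  T.node ⊆ Set.Iio κ ∧ (∀ x ∈ T.node, T.level x < κ) ∧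
  (∀ β < κ, (T.lvl β).Nonempty) ∧
  (∀ β < κ, Cardinal.mk (T.lvl β) < Cardinal.lift.{1} κ.card) ∧
  Cardinal.lift.{1} (Order.succ κ.card) ≤ Cardinal.mk {b : Set Ordinal.{0} | CofBranch T κ b} ∧
  (∀ δ < κ, InaccOrd δ → RegressiveAt T δ)

/-! ## The forcing `K_κ` adding a `κ`-regressive `κ`-Kurepa tree -/

/-- A condition of `K_κ`: a normal tree on `κ` of successor height `top + 1` with
small levels, regressive maps at inaccessible levels, together with a one-to-one
map `h` from the top level into `κ⁺`. -/
structure KCond (κ : Ordinal.{0}) : Type 1 where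
  t : LvTree
  top : Ordinal.{0}
  h : Ordinal.{0} → Ordinal.{0}
  node_sub : t.node ⊆ Set.Iio κ
  top_lt : top < κ
  level_le : ∀ x ∈ t.node, t.level x ≤ top
  levels_ne : ∀ β ≤ top, (t.lvl β).Nonempty
  small : ∀ β, Cardinal.mk (t.lvl β) < Cardinal.lift.{1} κ.card
  normal : ∀ x ∈ t.node, ∀ β, t.level x ≤ β → β ≤ top → ∃ y ∈ t.lvl β, t.lt x y ∨ x = y
  regr : ∀ δ, δ ≤ top → InaccOrd δ → RegressiveAt t δ
  h_inj : ∀ x ∈ t.lvl top, ∀ y ∈ t.lvl top, h x = h y → x = y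
  h_lt : ∀ x ∈ t.lvl top, h x < cardSucc κ

/-- The order of `K_κ`: `p ≤ q` iff the tree of `q` is the restriction of the tree
of `p` to the height of `q`, `ran(q.h) ⊆ ran(p.h)` and `q.h⁻¹(ξ) <_t p.h⁻¹(ξ)`. -/
def KLE (κ : Ordinal.{0}) (p q : KCond κ) : Prop :=
  q.top ≤ p.top ∧
  (∀ x, x ∈ q.t.node ↔ x ∈ p.t.node ∧ p.t.level x ≤ q.top) ∧
  (∀ x ∈ q.t.node, ∀ y ∈ q.t.node, (q.t.lt x y ↔ p.t.lt x y)) ∧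
  (∀ x ∈ q.t.node, q.t.level x = p.t.level x) ∧
  (∀ ξ, (∃ x ∈ q.t.lvl q.top, q.h x = ξ) → ∃ y ∈ p.t.lvl p.top, p.h y = ξ) ∧
  (∀ x ∈ q.t.lvl q.top, ∀ y ∈ p.t.lvl p.top, q.h x = p.h y → (p.t.lt x y ∨ x = y))

namespace Stmt5

def LL (κ : Ordinal.{0}) : Cardinal.{1} := Cardinal.lift.{1} κ.card

variable {κ : Ordinal.{0}}

lemma hreg (hκ : InaccOrd κ) : κ.card.IsRegular := hκ.1.isRegular
lemma hsl (hκ : InaccOrd κ) : κ.card.IsStrongLimit := hκ.1.isStrongLimit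

lemma aleph0_le_LL (hκ : InaccOrd κ) : Cardinal.aleph0.{1} ≤ LL κ := by
  rw [LL, ← Cardinal.lift_aleph0.{1,0}]
  exact Cardinal.lift_le.2 hκ.1.1.le

lemma kappa_isLimit (hκ : InaccOrd κ) : Order.IsSuccLimit κ := by
  rw [← hκ.2]; exact Cardinal.isSuccLimit_ord hκ.1.1.le

lemma card_lt_k (hκ : InaccOrd κ) {o : Ordinal.{0}} (h : o < κ) : o.card < κ.card :=
  Cardinal.lt_ord.1 (by rwa [hκ.2])

lemma lt_k_of_card (hκ : InaccOrd κ) {o : Ordinal.{0}} (h : o.card < κ.card) : o < κ := by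
  rw [← hκ.2]; exact Cardinal.lt_ord.2 h

lemma add_lt_k (hκ : InaccOrd κ) {a b : Ordinal.{0}} (ha : a < κ) (hb : b < κ) : a + b < κ := by
  apply lt_k_of_card hκ
  rw [Ordinal.card_add]
  exact Cardinal.add_lt_of_lt hκ.1.1.le (card_lt_k hκ ha) (card_lt_k hκ hb)

lemma succ_lt_k (hκ : InaccOrd κ) {a : Ordinal.{0}} (ha : a < κ) : a + 1 < κ := by
  rw [Ordinal.add_one_eq_succ]; exact (kappa_isLimit hκ).succ_lt ha

lemma mul_lt_k (hκ : InaccOrd κ) {a b : Ordinal.{0}} (ha : a < κ) (hb : b < κ) : a * b < κ := by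
  apply lt_k_of_card hκ
  rw [Ordinal.card_mul]
  exact Cardinal.mul_lt_of_lt hκ.1.1.le (card_lt_k hκ ha) (card_lt_k hκ hb)

lemma cardSucc_card : (cardSucc κ).card = Order.succ κ.card := Cardinal.card_ord _

lemma cof_cardSucc (hκ : InaccOrd κ) : (cardSucc κ).cof = Order.succ κ.card :=
  (Cardinal.isRegular_succ hκ.1.1.le).cof_eq

lemma LL_lt_lift_cof_cardSucc (hκ : InaccOrd κ) :
    LL κ < Cardinal.lift.{1} (cardSucc κ).cof := by
  rw [cof_cardSucc hκ]
  exact Cardinal.lift_lt.2 (Order.lt_succ _)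

lemma cardSucc_pos (hκ : InaccOrd κ) : 0 < cardSucc κ :=
  (Cardinal.isRegular_succ hκ.1.1.le).ord_pos

lemma kappa_lt_cardSucc (hκ : InaccOrd κ) : κ < cardSucc κ := by
  conv_lhs => rw [← hκ.2]
  exact Cardinal.ord_lt_ord.2 (Order.lt_succ _)

lemma cardSucc_isLimit (hκ : InaccOrd κ) : Order.IsSuccLimit (cardSucc κ) :=
  Cardinal.isSuccLimit_ord (hκ.1.1.le.trans (Order.le_succ _))

lemma succ_lt_cardSucc (hκ : InaccOrd κ) {a : Ordinal.{0}} (h : a < cardSucc κ) :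
    a + 1 < cardSucc κ := by
  rw [Ordinal.add_one_eq_succ]
  exact (cardSucc_isLimit hκ).succ_lt h

lemma card_le_of_lt_cardSucc {o : Ordinal.{0}} (h : o < cardSucc κ) : o.card ≤ κ.card :=
  Order.lt_succ_iff.1 (Cardinal.lt_ord.1 h)

lemma cof_kappa (hκ : InaccOrd κ) : κ.cof = κ.card := by
  conv_lhs => rw [← hκ.2]
  exact (hreg hκ).cof_eq

lemma bdd_of_small {l : Ordinal.{0}} (hl : 0 < l) (s : Set Ordinal.{0})
    (hsub : ∀ x ∈ s, x < l) (hcard : Cardinal.mk s < Cardinal.lift.{1} l.cof) :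
    ∃ b, b < l ∧ ∀ x ∈ s, x ≤ b := by
  rcases s.eq_empty_or_nonempty with rfl | hne
  · exact ⟨0, hl, by simp⟩
  · have hss : s ⊆ Set.Iio l := fun x hx => hsub x hx
    haveI : Small.{0} s := small_subset hss
    set f : Shrink.{0} s → Ordinal.{0} := fun j => ((equivShrink s).symm j : Ordinal) with hf
    have hmk : Cardinal.mk (Shrink.{0} s) < l.cof := by
      have h1 : Cardinal.lift.{1} (Cardinal.mk (Shrink.{0} s)) = Cardinal.mk s := by
        simpa using Cardinal.lift_mk_shrink'.{1,0} s
      rw [← Cardinal.lift_lt.{0,1}, h1]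
      exact hcard
    have hb : (⨆ j, f j) < l :=
      Ordinal.iSup_lt_ord_lift (by simpa using hmk) (fun j => hsub _ ((equivShrink s).symm j).2)
    refine ⟨⨆ j, f j, hb, fun x hx => ?_⟩
    have hfx : f (equivShrink s ⟨x, hx⟩) = x := by simp [hf]
    rw [← hfx]
    exact le_ciSup (Ordinal.bddAbove_range f) _

lemma mk_small_subsets_Iio (hκ : InaccOrd κ) :
    Cardinal.mk {s : Set (↥(Set.Iio κ)) // Cardinal.mk s < LL κ} = LL κ := by
  have hα : Cardinal.mk ↥(Set.Iio κ) = LL κ := Ordinal.mk_Iio_ordinal κ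
  have hsl' : ∀ x < Cardinal.mk ↥(Set.Iio κ), (2:Cardinal.{1}) ^ x < Cardinal.mk ↥(Set.Iio κ) := by
    intro x hx
    rw [hα] at hx ⊢
    obtain ⟨y, rfl⟩ := Cardinal.mem_range_lift_of_le hx.le
    rw [← Cardinal.lift_two_power]
    exact Cardinal.lift_lt.2 ((hsl hκ).two_power_lt (Cardinal.lift_lt.1 hx))
  have hcof : ((Cardinal.mk ↥(Set.Iio κ)).ord).cof = LL κ := by
    rw [hα, LL, ← Cardinal.lift_ord, ← Ordinal.lift_cof, (hreg hκ).cof_eq]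
  have hres := Cardinal.mk_subset_mk_lt_cof hsl'
  rw [hcof, hα] at hres
  exact hres

lemma mk_small_subsets (hκ : InaccOrd κ) {α : Type 1} (T : Set α) (hT : Cardinal.mk T ≤ LL κ) :
    Cardinal.mk {s : Set α // s ⊆ T ∧ Cardinal.mk s < LL κ} ≤ LL κ := by
  obtain ⟨e⟩ := (Cardinal.le_def _ _).1 (hT.trans_eq (Ordinal.mk_Iio_ordinal κ).symm)
  have key : ∀ s : {s : Set α // s ⊆ T ∧ Cardinal.mk s < LL κ},
      Cardinal.mk ↥(e '' (Subtype.val ⁻¹' s.1)) < LL κ := by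
    rintro ⟨s, hsT, hs⟩
    rwa [Cardinal.mk_image_eq e.injective,
      Cardinal.mk_preimage_of_injective_of_subset_range _ _ Subtype.val_injective
        (by rwa [Subtype.range_val])]
  have hinj : Function.Injective
      (fun s : {s : Set α // s ⊆ T ∧ Cardinal.mk s < LL κ} =>
        (⟨e '' (Subtype.val ⁻¹' s.1), key s⟩ : {u : Set ↥(Set.Iio κ) // Cardinal.mk u < LL κ})) := by
    intro s₁ s₂ h
    have h1 : e '' (Subtype.val ⁻¹' s₁.1) = e '' (Subtype.val ⁻¹' s₂.1) :=
      congrArg Subtype.val h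
    have h2 := Set.image_injective.2 e.injective h1
    apply Subtype.ext
    have h3 := congrArg (Set.image (Subtype.val : T → α)) h2
    rwa [Set.image_preimage_eq_of_subset (by rw [Subtype.range_val]; exact s₁.2.1),
      Set.image_preimage_eq_of_subset (by rw [Subtype.range_val]; exact s₂.2.1)] at h3
  exact (Cardinal.mk_le_of_injective hinj).trans (mk_small_subsets_Iio hκ).le

end Stmt5

namespace Stmt5

variable {κ : Ordinal.{0}}

lemma cof_ord_LL (hκ : InaccOrd κ) : ((LL κ).ord).cof = LL κ := by
  rw [LL, ← Cardinal.lift_ord, ← Ordinal.lift_cof, (hreg hκ).cof_eq]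

lemma LL_regular (hκ : InaccOrd κ) : (LL κ).IsRegular :=
  ⟨aleph0_le_LL hκ, (cof_ord_LL hκ).ge⟩

lemma node_small (hκ : InaccOrd κ) (p : KCond κ) : Cardinal.mk ↥p.t.node < LL κ := by
  have hIic : Set.Iic p.top = Set.Iio (p.top + 1) := by
    ext x
    simp [Order.lt_add_one_iff]
  have hsub : p.t.node ⊆ ⋃ (β : ↥(Set.Iic p.top)), p.t.lvl β.1 := fun x hx =>
    Set.mem_iUnion.2 ⟨⟨p.t.level x, p.level_le x hx⟩, ⟨hx, rfl⟩⟩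
  have hι : Cardinal.mk ↥(Set.Iic p.top) < LL κ := by
    rw [hIic, Ordinal.mk_Iio_ordinal]
    exact Cardinal.lift_lt.2 (card_lt_k hκ (succ_lt_k hκ p.top_lt))
  calc Cardinal.mk ↥p.t.node ≤ Cardinal.mk ↥(⋃ (β : ↥(Set.Iic p.top)), p.t.lvl β.1) :=
        Cardinal.mk_le_mk_of_subset hsub
    _ ≤ Cardinal.sum (fun β : ↥(Set.Iic p.top) => Cardinal.mk ↥(p.t.lvl β.1)) :=
        Cardinal.mk_iUnion_le_sum_mk
    _ < LL κ := Cardinal.sum_lt_of_isRegular (LL_regular hκ) hι (fun β => p.small β.1)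

end Stmt5
namespace Stmt5

variable {κ : Ordinal.{0}}

lemma compat_of_aligned (hκ : InaccOrd κ) (p q : KCond κ)
    (htop : q.top = p.top) (hnode : q.t.node = p.t.node)
    (hltpq : ∀ x y, q.t.lt x y ↔ p.t.lt x y)
    (hlev : ∀ x ∈ p.t.node, q.t.level x = p.t.level x)
    (halign : ∀ x ∈ p.t.lvl p.top, ∀ y ∈ p.t.lvl p.top, p.h x = q.h y → x = y) :
    ∃ r : KCond κ, KLE κ r p ∧ KLE κ r q := by
  classical
  obtain ⟨b, hbκ, hb⟩ := bdd_of_small (kappa_isLimit hκ).pos p.t.node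
    (fun x hx => p.node_sub hx) (by rw [cof_kappa hκ]; exact node_small hκ p)
  set ν := b + 1 with hνdef
  have hνκ : ν < κ := succ_lt_k hκ hbκ
  have hnodeν : ∀ x ∈ p.t.node, x < ν := fun x hx =>
    lt_of_le_of_lt (hb x hx) (by rw [hνdef, Ordinal.add_one_eq_succ]; exact Order.lt_succ b)
  set D := p.t.lvl p.top with hDdef
  have hDnode : ∀ x ∈ D, x ∈ p.t.node := fun x hx => hx.1
  have hDlev : ∀ x ∈ D, p.t.level x = p.top := fun x hx => hx.2
  have hDν : ∀ x ∈ D, x < ν := fun x hx => hnodeν x (hDnode x hx)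
  have hmul2 : ν * 2 = ν + ν := by
    rw [show (2 : Ordinal.{0}) = 1 + 1 from (one_add_one_eq_two).symm, mul_add,
      mul_one]
  have h2κ : (2 : Ordinal.{0}) < κ := by
    refine lt_of_lt_of_le ?_ (Ordinal.omega0_le_of_isSuccLimit (kappa_isLimit hκ))
    exact_mod_cast Ordinal.nat_lt_omega0 2
  have hν2κ : ν * 2 < κ := mul_lt_k hκ hνκ h2κ
  have hνA : ∀ x : Ordinal.{0}, ν ≤ ν + x := fun x => le_self_add
  have hνB : ∀ x : Ordinal.{0}, ν ≤ ν * 2 + x := fun x =>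
    le_trans (by rw [hmul2]; exact (le_self_add : ν ≤ ν + ν)) (le_self_add : ν * 2 ≤ ν * 2 + x)
  have hAsub : ∀ x : Ordinal.{0}, (ν + x) - ν = x := fun x => Ordinal.add_sub_cancel ν x
  have hBsub : ∀ x : Ordinal.{0}, (ν * 2 + x) - ν * 2 = x := fun x =>
    Ordinal.add_sub_cancel (ν * 2) x
  have hAlt2 : ∀ x : Ordinal.{0}, x < ν → ν + x < ν * 2 := fun x hx => by
    rw [hmul2]; exact (add_lt_add_iff_left ν).2 hx
  have hBnotlt2 : ∀ x : Ordinal.{0}, ¬ (ν * 2 + x < ν * 2) := fun x =>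
    not_lt.2 le_self_add
  have hABne : ∀ x y : Ordinal.{0}, x < ν → ν + x ≠ ν * 2 + y := fun x y hx =>
    ne_of_lt ((hAlt2 x hx).trans_le le_self_add)
  have hAinj : ∀ x y : Ordinal.{0}, ν + x = ν + y → x = y := fun x y h => by
    rw [← hAsub x, ← hAsub y, h]
  have hBinj : ∀ x y : Ordinal.{0}, ν * 2 + x = ν * 2 + y → x = y := fun x y h => by
    rw [← hBsub x, ← hBsub y, h]
  -- codes for the new top nodes
  set Code : Ordinal.{0} → Ordinal.{0} → Prop :=
    fun x z => z = ν + x ∨ (z = ν * 2 + x ∧ q.h x ≠ p.h x) with hCodeDef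
  set NewP : Ordinal.{0} → Prop := fun z => ∃ x, x ∈ D ∧ Code x z with hNewPDef
  have hNew_ge : ∀ z, NewP z → ν ≤ z := by
    rintro z ⟨x, hx, (rfl | ⟨rfl, -⟩)⟩
    · exact hνA x
    · exact hνB x
  have hNew_notnode : ∀ z, NewP z → z ∉ p.t.node := fun z hz hmem =>
    absurd (hnodeν z hmem) (not_lt.2 (hNew_ge z hz))
  have hbase_unique : ∀ x y z, x ∈ D → y ∈ D → Code x z → Code y z → x = y := by
    rintro x y z hx hy (rfl | ⟨rfl, -⟩) hcy
    · rcases hcy with h | ⟨h, -⟩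
      · exact hAinj _ _ h
      · exact absurd h (hABne x y (hDν x hx))
    · rcases hcy with h | ⟨h, -⟩
      · exact absurd h.symm (hABne y x (hDν y hy))
      · exact hBinj _ _ h
  -- the extended tree data
  set node' : Set Ordinal.{0} := p.t.node ∪ {z | NewP z} with hnode'Def
  set lt' : Ordinal.{0} → Ordinal.{0} → Prop :=
    fun a z => p.t.lt a z ∨ ∃ x, x ∈ D ∧ Code x z ∧ (p.t.lt a x ∨ a = x) with hlt'Def
  set lev' : Ordinal.{0} → Ordinal.{0} :=
    fun z => if z ∈ p.t.node then p.t.level z else p.top + 1 with hlev'Def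
  have hlev_node : ∀ z ∈ p.t.node, lev' z = p.t.level z := fun z hz => if_pos hz
  have hlev_new : ∀ z, NewP z → lev' z = p.top + 1 := fun z hz => if_neg (hNew_notnode z hz)
  have htoplt : p.top < p.top + 1 := by
    rw [Ordinal.add_one_eq_succ]; exact Order.lt_succ _
  have hlt_top1 : ∀ z ∈ p.t.node, p.t.level z < p.top + 1 := fun z hz =>
    lt_of_le_of_lt (p.level_le z hz) htoplt
  have hlt_old : ∀ a z, z ∈ p.t.node → (lt' a z ↔ p.t.lt a z) := by
    intro a z hz
    constructor
    · rintro (h | ⟨x, hx, hc, -⟩)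
      · exact h
      · exact absurd hz (hNew_notnode z ⟨x, hx, hc⟩)
    · exact Or.inl
  have hlt_below : ∀ a z, lt' a z → a ∈ p.t.node := by
    rintro a z (h | ⟨x, hx, -, (h | rfl)⟩)
    · exact (p.t.lt_mem h).1
    · exact (p.t.lt_mem h).1
    · exact hDnode a hx
  have hlt_new : ∀ a x z, x ∈ D → Code x z → (p.t.lt a x ∨ a = x) → lt' a z :=
    fun a x z hx hc h => Or.inr ⟨x, hx, hc, h⟩
  -- LvTree fields
  have hlt_mem : ∀ a z, lt' a z → a ∈ node' ∧ z ∈ node' := by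
    intro a z h
    refine ⟨Or.inl (hlt_below a z h), ?_⟩
    rcases h with h | ⟨x, hx, hc, -⟩
    · exact Or.inl (p.t.lt_mem h).2
    · exact Or.inr ⟨x, hx, hc⟩
  have hlt_trans : ∀ a z c, lt' a z → lt' z c → lt' a c := by
    intro a z c hab hbc
    have hznode : z ∈ p.t.node := hlt_below z c hbc
    have hab' : p.t.lt a z := (hlt_old a z hznode).1 hab
    rcases hbc with h | ⟨x, hx, hc, hzx⟩
    · exact Or.inl (p.t.lt_trans' hab' h)
    · refine hlt_new a x c hx hc (Or.inl ?_)
      rcases hzx with h | rfl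
      · exact p.t.lt_trans' hab' h
      · exact hab'
  have hlevel_mono : ∀ a z, lt' a z → lev' a < lev' z := by
    intro a z h
    have hanode : a ∈ p.t.node := hlt_below a z h
    rw [hlev_node a hanode]
    rcases h with h | ⟨x, hx, hc, -⟩
    · rw [hlev_node z (p.t.lt_mem h).2]
      exact p.t.level_mono h
    · rw [hlev_new z ⟨x, hx, hc⟩]
      exact hlt_top1 a hanode
  have hpred_linear : ∀ x y z, lt' y x → lt' z x → lt' y z ∨ y = z ∨ lt' z y := by
    intro x y z hy hz
    by_cases hx : x ∈ p.t.node
    · have h1 := (hlt_old y x hx).1 hy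
      have h2 := (hlt_old z x hx).1 hz
      rcases p.t.pred_linear h1 h2 with h | h | h
      · exact Or.inl (Or.inl h)
      · exact Or.inr (Or.inl h)
      · exact Or.inr (Or.inr (Or.inl h))
    · rcases hy with h | ⟨w₁, hw₁, hc₁, hy₁⟩
      · exact absurd (p.t.lt_mem h).2 hx
      rcases hz with h | ⟨w₂, hw₂, hc₂, hz₂⟩
      · exact absurd (p.t.lt_mem h).2 hx
      have hw : w₁ = w₂ := hbase_unique w₁ w₂ x hw₁ hw₂ hc₁ hc₂
      subst hw
      rcases hy₁ with h1 | rfl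
      · rcases hz₂ with h2 | rfl
        · rcases p.t.pred_linear h1 h2 with h | h | h
          · exact Or.inl (Or.inl h)
          · exact Or.inr (Or.inl h)
          · exact Or.inr (Or.inr (Or.inl h))
        · exact Or.inl (Or.inl h1)
      · rcases hz₂ with h2 | rfl
        · exact Or.inr (Or.inr (Or.inl h2))
        · exact Or.inr (Or.inl rfl)
  have hpred_ex : ∀ x ∈ node', ∀ β < lev' x, ∃ y, lt' y x ∧ lev' y = β := by
    intro x hx β hβ
    rcases hx with hx | ⟨w, hw, hc⟩
    · rw [hlev_node x hx] at hβ
      obtain ⟨y, hyx, hylev⟩ := p.t.pred_ex x hx β hβ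
      exact ⟨y, Or.inl hyx, by rw [hlev_node y (p.t.lt_mem hyx).1]; exact hylev⟩
    · rw [hlev_new x ⟨w, hw, hc⟩] at hβ
      have hβ' : β ≤ p.top := by
        rwa [Ordinal.add_one_eq_succ, Order.lt_succ_iff] at hβ
      rcases eq_or_lt_of_le hβ' with rfl | hβlt
      · exact ⟨w, hlt_new w w x hw hc (Or.inr rfl),
          by rw [hlev_node w (hDnode w hw)]; exact hDlev w hw⟩
      · have : β < p.t.level w := by rw [hDlev w hw]; exact hβlt
        obtain ⟨y, hyw, hylev⟩ := p.t.pred_ex w (hDnode w hw) β this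
        exact ⟨y, hlt_new y w x hw hc (Or.inl hyw),
          by rw [hlev_node y (p.t.lt_mem hyw).1]; exact hylev⟩
  set t' : LvTree :=
    { node := node', lt := lt', level := lev',
      lt_mem := fun {a z} h => hlt_mem a z h
      lt_trans' := fun {a z c} h1 h2 => hlt_trans a z c h1 h2
      level_mono := fun {a z} h => hlevel_mono a z h
      pred_linear := fun {x y z} h1 h2 => hpred_linear x y z h1 h2
      pred_ex := hpred_ex } with ht'Def
  -- level sets of t'
  have hlvl_le : ∀ β ≤ p.top, t'.lvl β = p.t.lvl β := by
    intro β hβ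
    ext z
    constructor
    · rintro ⟨hzn | hzn, hzl⟩
      · exact ⟨hzn, by rw [← hlev_node z hzn]; exact hzl⟩
      · exfalso
        rw [show t'.level z = lev' z from rfl, hlev_new z hzn] at hzl
        exact absurd (hzl ▸ hβ : p.top + 1 ≤ p.top) (not_le.2 htoplt)
    · rintro ⟨hzn, hzl⟩
      exact ⟨Or.inl hzn, by rw [show t'.level z = lev' z from rfl, hlev_node z hzn]; exact hzl⟩
  have hlvl_new : ∀ z, z ∈ t'.lvl (p.top + 1) ↔ NewP z := by
    intro z
    constructor
    · rintro ⟨hzn | hzn, hzl⟩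
      · exact absurd (by rw [← hlev_node z hzn]; exact hzl)
          (ne_of_lt (hlt_top1 z hzn))
      · exact hzn
    · intro hz
      exact ⟨Or.inr hz, hlev_new z hz⟩
  have hDq : q.t.lvl q.top = D := by
    ext z
    constructor
    · rintro ⟨hzn, hzl⟩
      have hzn' : z ∈ p.t.node := hnode ▸ hzn
      exact ⟨hzn', by rw [← hlev z hzn', hzl, htop]⟩
    · rintro ⟨hzn, hzl⟩
      exact ⟨hnode.symm ▸ hzn, by rw [hlev z hzn, hzl, htop]⟩
  -- the new h
  set h' : Ordinal.{0} → Ordinal.{0} :=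
    fun z => if z < ν * 2 then p.h (z - ν) else q.h (z - ν * 2) with hh'Def
  have hh_A : ∀ x, x < ν → h' (ν + x) = p.h x := fun x hx => by
    rw [hh'Def]; simp only []; rw [if_pos (hAlt2 x hx), hAsub]
  have hh_B : ∀ x : Ordinal.{0}, h' (ν * 2 + x) = q.h x := fun x => by
    rw [hh'Def]; simp only []; rw [if_neg (hBnotlt2 x), hBsub]
  -- build the condition r
  have hfsub : t'.node ⊆ Set.Iio κ := by
    rintro z (hz | ⟨x, hx, (rfl | ⟨rfl, -⟩)⟩)
    · exact p.node_sub hz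
    · exact add_lt_k hκ hνκ ((hDν x hx).trans hνκ)
    · exact add_lt_k hκ hν2κ ((hDν x hx).trans hνκ)
  have hftop : p.top + 1 < κ := succ_lt_k hκ p.top_lt
  have hfle : ∀ x ∈ t'.node, t'.level x ≤ p.top + 1 := by
    rintro z (hz | hz)
    · rw [show t'.level z = lev' z from rfl, hlev_node z hz]
      exact le_of_lt (hlt_top1 z hz)
    · rw [show t'.level z = lev' z from rfl, hlev_new z hz]
  have hfne : ∀ β ≤ p.top + 1, (t'.lvl β).Nonempty := by
    intro β hβ
    rcases le_or_gt β p.top with h | h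
    · obtain ⟨x, hx⟩ := p.levels_ne β h
      exact ⟨x, (hlvl_le β h).symm ▸ hx⟩
    · have hβeq : β = p.top + 1 := le_antisymm hβ (by
        rwa [Ordinal.add_one_eq_succ, Order.succ_le_iff])
      obtain ⟨x₀, hx₀⟩ := p.levels_ne p.top le_rfl
      refine ⟨ν + x₀, ?_⟩
      rw [hβeq]
      exact (hlvl_new _).2 ⟨x₀, hx₀, Or.inl rfl⟩
  have hfsm : ∀ β, Cardinal.mk ↥(t'.lvl β) < Cardinal.lift.{1} κ.card := by
    intro β
    by_cases h1 : β ≤ p.top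
    · rw [hlvl_le β h1]; exact p.small β
    · by_cases h2 : β = p.top + 1
      · subst h2
        have hsub : t'.lvl (p.top + 1) ⊆
            ((fun x => ν + x) '' D) ∪ ((fun x => ν * 2 + x) '' D) := by
          intro z hz
          obtain ⟨x, hx, (rfl | ⟨rfl, -⟩)⟩ := (hlvl_new z).1 hz
          · exact Or.inl ⟨x, hx, rfl⟩
          · exact Or.inr ⟨x, hx, rfl⟩
        refine lt_of_le_of_lt ((Cardinal.mk_le_mk_of_subset hsub).trans
          (Cardinal.mk_union_le _ _)) ?_
        refine Cardinal.add_lt_of_lt (aleph0_le_LL hκ) ?_ ?_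
        · exact lt_of_le_of_lt Cardinal.mk_image_le (p.small p.top)
        · exact lt_of_le_of_lt Cardinal.mk_image_le (p.small p.top)
      · have hempty : t'.lvl β = ∅ := by
          ext z
          simp only [Set.mem_empty_iff_false, iff_false]
          rintro ⟨hzn | hzn, hzl⟩
          · rw [show t'.level z = lev' z from rfl, hlev_node z hzn] at hzl
            exact h1 (hzl ▸ p.level_le z hzn)
          · rw [show t'.level z = lev' z from rfl, hlev_new z hzn] at hzl
            exact h2 hzl.symm
        rw [hempty, Cardinal.mk_emptyCollection]
        exact lt_of_lt_of_le Cardinal.aleph0_pos (aleph0_le_LL hκ)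
  have hfnorm : ∀ x ∈ t'.node, ∀ β, t'.level x ≤ β → β ≤ p.top + 1 →
      ∃ y ∈ t'.lvl β, t'.lt x y ∨ x = y := by
    intro x hx β hxβ hβ
    by_cases h1 : β ≤ p.top
    · have hxnode : x ∈ p.t.node := by
        rcases hx with hx | hx
        · exact hx
        · exfalso
          rw [show t'.level x = lev' x from rfl, hlev_new x hx] at hxβ
          exact absurd (hxβ.trans h1) (not_le.2 htoplt)
      have hxβ' : p.t.level x ≤ β := by
        rw [show t'.level x = lev' x from rfl, hlev_node x hxnode] at hxβ
        exact hxβ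
      obtain ⟨y, hy, hcase⟩ := p.normal x hxnode β hxβ' h1
      refine ⟨y, (hlvl_le β h1).symm ▸ hy, ?_⟩
      rcases hcase with h | rfl
      · exact Or.inl (Or.inl h)
      · exact Or.inr rfl
    · have hβeq : β = p.top + 1 := le_antisymm hβ (by
        rw [Ordinal.add_one_eq_succ, Order.succ_le_iff]; exact not_le.1 h1)
      subst hβeq
      rcases hx with hxold | hxnew
      · obtain ⟨z, hz, hcase⟩ := p.normal x hxold p.top (p.level_le x hxold) le_rfl
        refine ⟨ν + z, (hlvl_new _).2 ⟨z, hz, Or.inl rfl⟩, Or.inl ?_⟩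
        exact hlt_new x z (ν + z) hz (Or.inl rfl) hcase
      · exact ⟨x, (hlvl_new x).2 hxnew, Or.inr rfl⟩
  have hfregr : ∀ δ, δ ≤ p.top + 1 → InaccOrd δ → RegressiveAt t' δ := by
    intro δ hδ hinacc
    have hδtop : δ ≤ p.top := by
      by_contra hcon
      have hδeq : δ = p.top + 1 := le_antisymm hδ (by
        rwa [Ordinal.add_one_eq_succ, Order.succ_le_iff, ← not_le])
      have hlim : Order.IsSuccLimit δ := by
        rw [← hinacc.2]
        exact Cardinal.isSuccLimit_ord hinacc.1.1.le
      rw [hδeq, Ordinal.add_one_eq_succ] at hlim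
      exact (Order.not_isSuccPrelimit_succ p.top) hlim.isSuccPrelimit
    obtain ⟨f, hf1, hf2⟩ := p.regr δ hδtop hinacc
    refine ⟨f, ?_, ?_⟩
    · intro x hx
      rw [hlvl_le δ hδtop] at hx
      exact Or.inl (hf1 x hx)
    · intro x hx y hy hinc z hzx hzy
      rw [hlvl_le δ hδtop] at hx hy
      have hxn : x ∈ p.t.node := hx.1
      have hyn : y ∈ p.t.node := hy.1
      have hinc' : p.t.Incomp x y :=
        ⟨fun h => hinc.1 (Or.inl h), fun h => hinc.2.1 (Or.inl h), hinc.2.2⟩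
      have hzx' := (hlt_old z x hxn).1 hzx
      have hzy' := (hlt_old z y hyn).1 hzy
      obtain ⟨h1, h2⟩ := hf2 x hx y hy hinc' z hzx' hzy'
      exact ⟨Or.inl h1, Or.inl h2⟩
  have hfinj : ∀ x ∈ t'.lvl (p.top + 1), ∀ y ∈ t'.lvl (p.top + 1), h' x = h' y → x = y := by
    intro x hx y hy hxy
    obtain ⟨a, haD, hca⟩ := (hlvl_new x).1 hx
    obtain ⟨c, hcD, hcc⟩ := (hlvl_new y).1 hy
    rcases hca with rfl | ⟨rfl, hane⟩
    · rcases hcc with rfl | ⟨rfl, hcne⟩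
      · rw [hh_A a (hDν a haD), hh_A c (hDν c hcD)] at hxy
        rw [p.h_inj a haD c hcD hxy]
      · rw [hh_A a (hDν a haD), hh_B c] at hxy
        exfalso
        have hac : a = c := halign a haD c hcD hxy
        subst hac
        exact hcne hxy.symm
    · rcases hcc with rfl | ⟨rfl, hcne⟩
      · rw [hh_B a, hh_A c (hDν c hcD)] at hxy
        exfalso
        have hca : c = a := halign c hcD a haD hxy.symm
        subst hca
        exact hane hxy
      · rw [hh_B a, hh_B c] at hxy
        have haq : a ∈ q.t.lvl q.top := hDq.symm ▸ haD
        have hcq : c ∈ q.t.lvl q.top := hDq.symm ▸ hcD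
        rw [q.h_inj a haq c hcq hxy]
  have hflt : ∀ x ∈ t'.lvl (p.top + 1), h' x < cardSucc κ := by
    intro x hx
    obtain ⟨a, haD, hca⟩ := (hlvl_new x).1 hx
    rcases hca with rfl | ⟨rfl, -⟩
    · rw [hh_A a (hDν a haD)]
      exact p.h_lt a haD
    · rw [hh_B a]
      exact q.h_lt a (hDq.symm ▸ haD)
  refine ⟨⟨t', p.top + 1, h', hfsub, hftop, hfle, hfne, hfsm, hfnorm, hfregr, hfinj, hflt⟩,
    ⟨le_of_lt htoplt, ?_, ?_, ?_, ?_, ?_⟩, ⟨by rw [htop]; exact le_of_lt htoplt, ?_, ?_, ?_, ?_, ?_⟩⟩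
  · -- r ≤ p : nodes
    intro x
    show x ∈ p.t.node ↔ x ∈ t'.node ∧ t'.level x ≤ p.top
    constructor
    · intro hx
      exact ⟨Or.inl hx, by
        rw [show t'.level x = lev' x from rfl, hlev_node x hx]; exact p.level_le x hx⟩
    · rintro ⟨hx | hx, hxl⟩
      · exact hx
      · exfalso
        rw [show t'.level x = lev' x from rfl, hlev_new x hx] at hxl
        exact absurd hxl (not_le.2 htoplt)
  · -- r ≤ p : lt
    intro x hx y hy
    show p.t.lt x y ↔ t'.lt x y
    exact (hlt_old x y hy).symm
  · -- r ≤ p : level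
    intro x hx
    show p.t.level x = t'.level x
    exact (hlev_node x hx).symm
  · -- r ≤ p : range of h
    rintro ξ ⟨x, hx, rfl⟩
    exact ⟨ν + x, (hlvl_new _).2 ⟨x, hx, Or.inl rfl⟩, hh_A x (hDν x hx)⟩
  · -- r ≤ p : h alignment
    intro x hx y hy hxy
    replace hy : NewP y := (hlvl_new y).1 hy
    obtain ⟨a, haD, hca⟩ := hy
    rcases hca with rfl | ⟨rfl, hane⟩
    · rw [show (⟨t', p.top + 1, h', hfsub, hftop, hfle, hfne, hfsm, hfnorm, hfregr, hfinj,
        hflt⟩ : KCond κ).h (ν + a) = h' (ν + a) from rfl, hh_A a (hDν a haD)] at hxy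
      have hxa : x = a := p.h_inj x hx a haD hxy
      subst hxa
      exact Or.inl (hlt_new x x (ν + x) haD (Or.inl rfl) (Or.inr rfl))
    · rw [show (⟨t', p.top + 1, h', hfsub, hftop, hfle, hfne, hfsm, hfnorm, hfregr, hfinj,
        hflt⟩ : KCond κ).h (ν * 2 + a) = h' (ν * 2 + a) from rfl, hh_B a] at hxy
      exfalso
      have hxa := halign x hx a haD hxy
      subst hxa
      exact hane hxy.symm
  · -- r ≤ q : nodes
    intro x
    show x ∈ q.t.node ↔ x ∈ t'.node ∧ t'.level x ≤ q.top
    rw [hnode, htop]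
    constructor
    · intro hx
      exact ⟨Or.inl hx, by
        rw [show t'.level x = lev' x from rfl, hlev_node x hx]; exact p.level_le x hx⟩
    · rintro ⟨hx | hx, hxl⟩
      · exact hx
      · exfalso
        rw [show t'.level x = lev' x from rfl, hlev_new x hx] at hxl
        exact absurd hxl (not_le.2 htoplt)
  · -- r ≤ q : lt
    intro x hx y hy
    show q.t.lt x y ↔ t'.lt x y
    have hy' : y ∈ p.t.node := hnode ▸ hy
    rw [hltpq x y]
    exact (hlt_old x y hy').symm
  · -- r ≤ q : level
    intro x hx
    show q.t.level x = t'.level x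
    have hx' : x ∈ p.t.node := hnode ▸ hx
    rw [hlev x hx']
    exact (hlev_node x hx').symm
  · -- r ≤ q : range of h
    rintro ξ ⟨x, hx, rfl⟩
    have hxD : x ∈ D := hDq ▸ hx
    by_cases hc : q.h x = p.h x
    · exact ⟨ν + x, (hlvl_new _).2 ⟨x, hxD, Or.inl rfl⟩, by
        show h' (ν + x) = q.h x
        rw [hh_A x (hDν x hxD), hc]⟩
    · exact ⟨ν * 2 + x, (hlvl_new _).2 ⟨x, hxD, Or.inr ⟨rfl, hc⟩⟩, hh_B x⟩
  · -- r ≤ q : h alignment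
    intro x hx y hy hxy
    have hxD : x ∈ D := hDq ▸ hx
    replace hy : NewP y := (hlvl_new y).1 hy
    obtain ⟨a, haD, hca⟩ := hy
    rcases hca with rfl | ⟨rfl, hane⟩
    · rw [show (⟨t', p.top + 1, h', hfsub, hftop, hfle, hfne, hfsm, hfnorm, hfregr, hfinj,
        hflt⟩ : KCond κ).h (ν + a) = h' (ν + a) from rfl, hh_A a (hDν a haD)] at hxy
      have hax : a = x := halign a haD x hxD hxy.symm
      subst hax
      exact Or.inl (hlt_new a a (ν + a) haD (Or.inl rfl) (Or.inr rfl))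
    · rw [show (⟨t', p.top + 1, h', hfsub, hftop, hfle, hfne, hfsm, hfnorm, hfregr, hfinj,
        hflt⟩ : KCond κ).h (ν * 2 + a) = h' (ν * 2 + a) from rfl, hh_B a] at hxy
      have hax : x = a := q.h_inj x hx a (hDq.symm ▸ haD) hxy
      subst hax
      exact Or.inl (hlt_new x x (ν * 2 + x) haD (Or.inr ⟨rfl, hane⟩) (Or.inr rfl))

end Stmt5
namespace Stmt5

/-- Iterate a step function along the ordinals, taking suprema. -/
noncomputable def dfun (step : Ordinal.{0} → Ordinal.{0}) : Ordinal.{0} → Ordinal.{0}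
  | η => ⨆ ζ : ↥(Set.Iio η), step (dfun step ζ.1)
termination_by η => η
decreasing_by exact ζ.2

lemma dfun_eq (step : Ordinal.{0} → Ordinal.{0}) (η : Ordinal.{0}) :
    dfun step η = ⨆ ζ : ↥(Set.Iio η), step (dfun step ζ.1) := by
  rw [dfun]

variable {κ : Ordinal.{0}}

lemma no_big_misaligned (hκ : InaccOrd κ) (D : Set Ordinal.{0})
    (hD : Cardinal.mk D < LL κ)
    (G : Ordinal.{0} → Ordinal.{0} → Ordinal.{0})
    (hGlt : ∀ i < cardSucc κ, ∀ x ∈ D, G i x < cardSucc κ)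
    (hGinj : ∀ i < cardSucc κ, ∀ x ∈ D, ∀ y ∈ D, G i x = G i y → x = y)
    (hmis : ∀ i < cardSucc κ, ∀ j < cardSucc κ, i ≠ j →
      ∃ x ∈ D, ∃ y ∈ D, x ≠ y ∧ G i x = G j y) : False := by
  classical
  set kp := cardSucc κ with hkpdef
  have hkp0 : 0 < kp := cardSucc_pos hκ
  have hlift_cof : Cardinal.lift.{1} kp.cof = Cardinal.lift.{1} (Order.succ κ.card) := by
    rw [cof_cardSucc hκ]
  have hLLcof : LL κ < Cardinal.lift.{1} kp.cof := LL_lt_lift_cof_cardSucc hκ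
  have haleph_cof : Cardinal.aleph0.{1} ≤ Cardinal.lift.{1} kp.cof :=
    le_of_lt (lt_of_le_of_lt (aleph0_le_LL hκ) hLLcof)
  have hlt1 : ∀ o : Ordinal.{0}, o < o + 1 := fun o => by
    rw [Ordinal.add_one_eq_succ]; exact Order.lt_succ o
  -- traces and least realizers
  set tr : Ordinal.{0} → Ordinal.{0} → Set (Ordinal.{0} × Ordinal.{0}) :=
    fun i β => {z | z.1 ∈ D ∧ G i z.1 = z.2 ∧ z.2 < β} with htrdef
  set lr : Ordinal.{0} → Ordinal.{0} → Ordinal.{0} :=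
    fun i β => sInf {j | j < kp ∧ tr j β = tr i β} with hlrdef
  have hlr_mem : ∀ i, i < kp → ∀ β, lr i β < kp ∧ tr (lr i β) β = tr i β := by
    intro i hi β
    exact csInf_mem (⟨i, hi, rfl⟩ : {j | j < kp ∧ tr j β = tr i β}.Nonempty)
  have htr_sub : ∀ i β, tr i β ⊆ D ×ˢ (Set.Iio β) := by
    rintro i β z ⟨h1, h2, h3⟩
    exact ⟨h1, h3⟩
  have htr_small : ∀ i β, Cardinal.mk ↥(tr i β) < LL κ := by
    intro i β
    have hinj : Function.Injective (fun z : ↥(tr i β) => (⟨z.1.1, z.2.1⟩ : ↥D)) := by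
      rintro ⟨⟨a1, a2⟩, ha⟩ ⟨⟨b1, b2⟩, hb⟩ h
      have h1 : a1 = b1 := congrArg Subtype.val h
      have ha2 : G i a1 = a2 := ha.2.1
      have hb2 : G i b1 = b2 := hb.2.1
      apply Subtype.ext
      have h2 : a2 = b2 := by rw [← ha2, ← hb2, h1]
      simp [h1, h2]
    exact lt_of_le_of_lt (Cardinal.mk_le_of_injective hinj) hD
  have hTr_count : ∀ β, β < kp →
      Cardinal.mk {s : Set (Ordinal.{0} × Ordinal.{0}) //
        s ⊆ D ×ˢ (Set.Iio β) ∧ Cardinal.mk s < LL κ} ≤ LL κ := by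
    intro β hβ
    apply mk_small_subsets hκ
    have hprod : Cardinal.mk ↥(D ×ˢ (Set.Iio β)) =
        Cardinal.mk ↥D * Cardinal.mk ↥(Set.Iio β) := by
      rw [Cardinal.mk_congr (Equiv.Set.prod D (Set.Iio β)), Cardinal.mk_prod,
        Cardinal.lift_id, Cardinal.lift_id]
    rw [hprod]
    calc Cardinal.mk ↥D * Cardinal.mk ↥(Set.Iio β) ≤ LL κ * LL κ := by
          refine mul_le_mul' hD.le ?_
          rw [Ordinal.mk_Iio_ordinal]
          exact Cardinal.lift_le.2 (card_le_of_lt_cardSucc hβ)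
      _ = LL κ := Cardinal.mul_eq_self (aleph0_le_LL hκ)
  -- one closure step
  have hstep : ∀ γ, γ < kp → ∃ γ', γ' < kp ∧ γ < γ' ∧
      (∀ i < γ, ∀ x ∈ D, G i x < γ') ∧ (∀ β < γ, ∀ i < kp, lr i β < γ') := by
    intro γ hγ
    set S1 : Set Ordinal.{0} := {o | ∃ i < γ, ∃ x ∈ D, o = G i x} with hS1def
    have hS1sub : ∀ o ∈ S1, o < kp := by
      rintro o ⟨i, hi, x, hx, rfl⟩
      exact hGlt i (hi.trans hγ) x hx
    have hS1card : Cardinal.mk S1 < Cardinal.lift.{1} kp.cof := by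
      have hsub : S1 ⊆ Set.range (fun z : ↥(Set.Iio γ) × ↥D => G z.1.1 z.2.1) := by
        rintro o ⟨i, hi, x, hx, rfl⟩
        exact ⟨(⟨i, hi⟩, ⟨x, hx⟩), rfl⟩
      refine lt_of_le_of_lt ((Cardinal.mk_le_mk_of_subset hsub).trans Cardinal.mk_range_le) ?_
      rw [Cardinal.mk_prod, Cardinal.lift_id, Cardinal.lift_id, Ordinal.mk_Iio_ordinal]
      refine Cardinal.mul_lt_of_lt haleph_cof ?_ (hD.trans hLLcof)
      exact lt_of_le_of_lt (Cardinal.lift_le.2 (card_le_of_lt_cardSucc hγ)) hLLcof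
    obtain ⟨b1, hb1, hb1'⟩ := bdd_of_small hkp0 S1 hS1sub hS1card
    set S2 : Set Ordinal.{0} := {o | ∃ β < γ, ∃ i < kp, o = lr i β} with hS2def
    have hS2sub : ∀ o ∈ S2, o < kp := by
      rintro o ⟨β, hβ, i, hi, rfl⟩
      exact (hlr_mem i hi β).1
    have hS2card : Cardinal.mk S2 < Cardinal.lift.{1} kp.cof := by
      set T : ↥(Set.Iio γ) → Type 1 := fun β =>
        {s : Set (Ordinal.{0} × Ordinal.{0}) //
          s ⊆ D ×ˢ (Set.Iio β.1) ∧ Cardinal.mk s < LL κ} with hTdef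
      set Ψ : (Σ β : ↥(Set.Iio γ), T β) → Ordinal.{0} := fun w =>
        if h : ∃ i, i < kp ∧ tr i w.1.1 = w.2.1 then lr h.choose w.1.1 else 0 with hΨdef
      have hcover : S2 ⊆ Set.range Ψ := by
        rintro o ⟨β, hβ, i, hi, rfl⟩
        refine ⟨⟨⟨β, hβ⟩, ⟨tr i β, htr_sub i β, htr_small i β⟩⟩, ?_⟩
        have hex : ∃ i', i' < kp ∧ tr i' β = tr i β := ⟨i, hi, rfl⟩
        show (if h : ∃ i', i' < kp ∧ tr i' β = tr i β then lr h.choose β else 0) = lr i β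
        rw [dif_pos hex]
        show sInf {j | j < kp ∧ tr j β = tr hex.choose β} = lr i β
        rw [hex.choose_spec.2]
      refine lt_of_le_of_lt ((Cardinal.mk_le_mk_of_subset hcover).trans Cardinal.mk_range_le) ?_
      rw [Cardinal.mk_sigma]
      refine lt_of_le_of_lt (Cardinal.sum_le_sum _ (fun _ => LL κ)
        (fun β => hTr_count β.1 (β.2.trans hγ))) ?_
      rw [Cardinal.sum_const', Ordinal.mk_Iio_ordinal]
      refine Cardinal.mul_lt_of_lt haleph_cof ?_ hLLcof
      exact lt_of_le_of_lt (Cardinal.lift_le.2 (card_le_of_lt_cardSucc hγ)) hLLcof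
    obtain ⟨b2, hb2, hb2'⟩ := bdd_of_small hkp0 S2 hS2sub hS2card
    refine ⟨max (max b1 b2) γ + 1, ?_, ?_, ?_, ?_⟩
    · exact succ_lt_cardSucc hκ (max_lt (max_lt hb1 hb2) hγ)
    · exact lt_of_le_of_lt (le_max_right _ _) (hlt1 _)
    · intro i hi x hx
      refine lt_of_le_of_lt ?_ (hlt1 _)
      exact le_trans (hb1' _ ⟨i, hi, x, hx, rfl⟩) (le_trans (le_max_left b1 b2) (le_max_left _ _))
    · intro β hβ i hi
      refine lt_of_le_of_lt ?_ (hlt1 _)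
      exact le_trans (hb2' _ ⟨β, hβ, i, hi, rfl⟩) (le_trans (le_max_right b1 b2) (le_max_left _ _))
  set stepf : Ordinal.{0} → Ordinal.{0} :=
    fun γ => if h : γ < kp then (hstep γ h).choose else 0 with hstepfdef
  have hstepf_spec : ∀ γ, γ < kp → stepf γ < kp ∧ γ < stepf γ ∧
      (∀ i < γ, ∀ x ∈ D, G i x < stepf γ) ∧ (∀ β < γ, ∀ i < kp, lr i β < stepf γ) := by
    intro γ hγ
    have := (hstep γ hγ).choose_spec
    rw [hstepfdef]
    simp only [dif_pos hγ]
    exact this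
  set dd : Ordinal.{0} → Ordinal.{0} := dfun stepf with hdddef
  have hdd_le : ∀ η ζ, ζ < η → stepf (dd ζ) ≤ dd η := by
    intro η ζ hζ
    rw [hdddef]
    conv_rhs => rw [dfun_eq]
    exact Ordinal.le_iSup (fun ζ' : ↥(Set.Iio η) => stepf (dfun stepf ζ'.1)) ⟨ζ, hζ⟩
  have hdd_lt_kp : ∀ η, η ≤ κ → dd η < kp := by
    intro η
    induction η using Ordinal.induction with
    | _ η IH =>
      intro hη
      rw [hdddef, dfun_eq]
      have hrange_sub : ∀ x ∈ Set.range (fun ζ' : ↥(Set.Iio η) => stepf (dfun stepf ζ'.1)),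
          x < kp := by
        rintro x ⟨ζ', rfl⟩
        exact (hstepf_spec _ (IH ζ'.1 ζ'.2 ((le_of_lt ζ'.2).trans hη))).1
      have hrange_card : Cardinal.mk ↥(Set.range (fun ζ' : ↥(Set.Iio η) =>
          stepf (dfun stepf ζ'.1))) < Cardinal.lift.{1} kp.cof := by
        refine lt_of_le_of_lt Cardinal.mk_range_le ?_
        rw [Ordinal.mk_Iio_ordinal]
        refine lt_of_le_of_lt (Cardinal.lift_le.2 (Ordinal.card_le_card hη)) ?_
        exact hLLcof
      obtain ⟨b, hb, hb'⟩ := bdd_of_small hkp0 _ hrange_sub hrange_card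
      exact lt_of_le_of_lt (Ordinal.iSup_le (fun ζ' => hb' _ ⟨ζ', rfl⟩)) hb
  have hdd_mono : ∀ a b, a ≤ b → dd a ≤ dd b := by
    intro a b hab
    rw [hdddef]
    conv_lhs => rw [dfun_eq]
    conv_rhs => rw [dfun_eq]
    apply Ordinal.iSup_le
    intro ζ
    exact Ordinal.le_iSup (fun ζ' : ↥(Set.Iio b) => stepf (dfun stepf ζ'.1))
      ⟨ζ.1, lt_of_lt_of_le ζ.2 hab⟩
  set δ := dd κ with hδdef
  have hδkp : δ < kp := hdd_lt_kp κ le_rfl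
  have hclosed_below : ∀ ζ, ζ < κ → dd ζ < δ := by
    intro ζ hζ
    have h1 : dd ζ < kp := hdd_lt_kp ζ hζ.le
    exact lt_of_lt_of_le (hstepf_spec _ h1).2.1 (hdd_le κ ζ hζ)
  have hmemdd : ∀ o, o < δ → ∃ ζ, ζ < κ ∧ o < dd (ζ + 1) ∧ ζ + 1 < κ := by
    intro o ho
    rw [hδdef, hdddef, dfun_eq, Ordinal.lt_iSup_iff] at ho
    obtain ⟨ζ, hζ⟩ := ho
    exact ⟨ζ.1, ζ.2, lt_of_lt_of_le hζ (hdd_le (ζ.1 + 1) ζ.1 (hlt1 _)), succ_lt_k hκ ζ.2⟩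
  have hR2 : ∀ i, i < δ → ∀ x ∈ D, G i x < δ := by
    intro i hi x hx
    obtain ⟨ζ, hζ, hi', hζ1⟩ := hmemdd i hi
    have h1 : dd (ζ + 1) < kp := hdd_lt_kp _ hζ1.le
    exact lt_of_lt_of_le ((hstepf_spec _ h1).2.2.1 i hi' x hx) (hdd_le κ (ζ + 1) hζ1)
  have hR3 : ∀ β, β < δ → ∀ i, i < kp → lr i β < δ := by
    intro β hβ i hi
    obtain ⟨ζ, hζ, hβ', hζ1⟩ := hmemdd β hβ
    have h1 : dd (ζ + 1) < kp := hdd_lt_kp _ hζ1.le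
    exact lt_of_lt_of_le ((hstepf_spec _ h1).2.2.2 β hβ' i hi) (hdd_le κ (ζ + 1) hζ1)
  -- a bound below δ for the small values of G δ
  have hchoice : ∀ o, ((∃ x ∈ D, o = G δ x) ∧ o < δ) →
      ∃ ζ, ζ < κ ∧ o < dd (ζ + 1) ∧ ζ + 1 < κ := fun o ho => hmemdd o ho.2
  classical
  set Dlt : Set Ordinal.{0} := {o | (∃ x ∈ D, o = G δ x) ∧ o < δ} with hDltdef
  set zf : Ordinal.{0} → Ordinal.{0} :=
    fun o => if h : (∃ x ∈ D, o = G δ x) ∧ o < δ then (hchoice o h).choose else 0 with hzfdef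
  have hZsub : ∀ z ∈ zf '' Dlt, z < κ := by
    rintro z ⟨o, ho, rfl⟩
    have hzeq : zf o = (hchoice o ho).choose := dif_pos ho
    rw [hzeq]
    exact (hchoice o ho).choose_spec.1
  have hZcard : Cardinal.mk ↥(zf '' Dlt) < Cardinal.lift.{1} κ.cof := by
    rw [cof_kappa hκ]
    refine lt_of_le_of_lt Cardinal.mk_image_le ?_
    have hsub : Dlt ⊆ (fun x => G δ x) '' D := by
      rintro o ⟨⟨x, hx, rfl⟩, -⟩
      exact ⟨x, hx, rfl⟩
    exact lt_of_le_of_lt ((Cardinal.mk_le_mk_of_subset hsub).trans Cardinal.mk_image_le) hD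
  obtain ⟨bz, hbz, hbz'⟩ := bdd_of_small (kappa_isLimit hκ).pos (zf '' Dlt) hZsub hZcard
  have hbsδ : dd (bz + 1) < δ := hclosed_below _ (succ_lt_k hκ hbz)
  have hbs : ∀ x ∈ D, G δ x < δ → G δ x < dd (bz + 1) := by
    intro x hx hlt
    have ho : (∃ x' ∈ D, G δ x = G δ x') ∧ G δ x < δ := ⟨⟨x, hx, rfl⟩, hlt⟩
    have h1 : G δ x < dd ((hchoice _ ho).choose + 1) := (hchoice _ ho).choose_spec.2.1
    have hmem : zf (G δ x) ∈ zf '' Dlt := ⟨_, ho, rfl⟩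
    have hzeq : zf (G δ x) = (hchoice _ ho).choose := dif_pos ho
    have h2 : (hchoice _ ho).choose ≤ bz := hzeq ▸ hbz' _ hmem
    exact lt_of_lt_of_le h1 (hdd_mono _ _ (add_le_add_left h2 1))
  -- the final contradiction
  have hj0mem := hlr_mem δ hδkp (dd (bz + 1))
  have hj0δ : lr δ (dd (bz + 1)) < δ := hR3 _ hbsδ δ hδkp
  obtain ⟨x, hx, y, hy, hxy, heq⟩ :=
    hmis δ hδkp (lr δ (dd (bz + 1))) (hj0δ.trans hδkp) (ne_of_gt hj0δ)
  have hξδ : G (lr δ (dd (bz + 1))) y < δ := hR2 _ hj0δ y hy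
  have hGδx : G δ x < δ := by rw [heq]; exact hξδ
  have hξbs : G δ x < dd (bz + 1) := hbs x hx hGδx
  have hmemtr : ((y, G (lr δ (dd (bz + 1))) y) : Ordinal.{0} × Ordinal.{0}) ∈
      tr (lr δ (dd (bz + 1))) (dd (bz + 1)) := by
    refine ⟨hy, rfl, ?_⟩
    show G (lr δ (dd (bz + 1))) y < dd (bz + 1)
    rw [← heq]
    exact hξbs
  rw [hj0mem.2] at hmemtr
  have hGy' : G δ y = G (lr δ (dd (bz + 1))) y := hmemtr.2.1
  exact hxy (hGinj δ hδkp x hx y hy (heq.trans hGy'.symm))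

end Stmt5
namespace Stmt5

variable {κ : Ordinal.{0}}

/-- The "essential tree data" of a condition. -/
def dataOf (p : KCond κ) : Ordinal.{0} × Set Ordinal.{0} ×
    Set (Ordinal.{0} × Ordinal.{0}) × Set (Ordinal.{0} × Ordinal.{0}) :=
  (p.top, p.t.node, {z | p.t.lt z.1 z.2}, {z | z.1 ∈ p.t.node ∧ p.t.level z.1 = z.2})

lemma dataOf_eq_spec {p q : KCond κ} (h : dataOf p = dataOf q) :
    q.top = p.top ∧ q.t.node = p.t.node ∧ (∀ x y, q.t.lt x y ↔ p.t.lt x y) ∧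
      (∀ x ∈ p.t.node, q.t.level x = p.t.level x) := by
  have h1 : p.top = q.top := congrArg (fun d => d.1) h
  have h2 : p.t.node = q.t.node := congrArg (fun d => d.2.1) h
  have h3 : {z : Ordinal.{0} × Ordinal.{0} | p.t.lt z.1 z.2} =
      {z : Ordinal.{0} × Ordinal.{0} | q.t.lt z.1 z.2} := congrArg (fun d => d.2.2.1) h
  have h4 : {z : Ordinal.{0} × Ordinal.{0} | z.1 ∈ p.t.node ∧ p.t.level z.1 = z.2} =
      {z : Ordinal.{0} × Ordinal.{0} | z.1 ∈ q.t.node ∧ q.t.level z.1 = z.2} :=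
    congrArg (fun d => d.2.2.2) h
  refine ⟨h1.symm, h2.symm, ?_, ?_⟩
  · intro x y
    constructor
    · intro hxy
      have hmem : ((x, y) : Ordinal.{0} × Ordinal.{0}) ∈
          {z : Ordinal.{0} × Ordinal.{0} | q.t.lt z.1 z.2} := hxy
      rw [← h3] at hmem
      exact hmem
    · intro hxy
      have hmem : ((x, y) : Ordinal.{0} × Ordinal.{0}) ∈
          {z : Ordinal.{0} × Ordinal.{0} | p.t.lt z.1 z.2} := hxy
      rw [h3] at hmem
      exact hmem
  · intro x hx
    have hmem : ((x, p.t.level x) : Ordinal.{0} × Ordinal.{0}) ∈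
        {z : Ordinal.{0} × Ordinal.{0} | z.1 ∈ p.t.node ∧ p.t.level z.1 = z.2} := ⟨hx, rfl⟩
    rw [h4] at hmem
    have : q.t.level x = p.t.level x := hmem.2
    exact this

lemma lvl_eq_of_data {p q : KCond κ} (h : dataOf p = dataOf q) :
    q.t.lvl q.top = p.t.lvl p.top := by
  obtain ⟨h1, h2, h3, h4⟩ := dataOf_eq_spec h
  ext z
  constructor
  · rintro ⟨hzn, hzl⟩
    have hzn' : z ∈ p.t.node := h2 ▸ hzn
    exact ⟨hzn', by rw [← h4 z hzn', hzl, h1]⟩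
  · rintro ⟨hzn, hzl⟩
    exact ⟨h2.symm ▸ hzn, by rw [h4 z hzn, hzl, h1]⟩

lemma fiber_le (hκ : InaccOrd κ) (A : Set (KCond κ))
    (hA : ∀ p ∈ A, ∀ q ∈ A, p ≠ q → ¬ ∃ r : KCond κ, KLE κ r p ∧ KLE κ r q)
    (d : Ordinal.{0} × Set Ordinal.{0} ×
      Set (Ordinal.{0} × Ordinal.{0}) × Set (Ordinal.{0} × Ordinal.{0})) :
    Cardinal.mk ↥{p : KCond κ | p ∈ A ∧ dataOf p = d} ≤ LL κ := by
  by_contra hcon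
  push_neg at hcon
  have hkple : Cardinal.mk ↥(Set.Iio (cardSucc κ)) ≤
      Cardinal.mk ↥{p : KCond κ | p ∈ A ∧ dataOf p = d} := by
    rw [Ordinal.mk_Iio_ordinal, cardSucc_card, Cardinal.lift_succ]
    exact Order.succ_le_of_lt hcon
  obtain ⟨e⟩ := (Cardinal.le_def _ _).1 hkple
  have hkp0 : (0 : Ordinal.{0}) < cardSucc κ := cardSucc_pos hκ
  classical
  set P : Ordinal.{0} → KCond κ :=
    fun i => if h : i < cardSucc κ then (e ⟨i, h⟩).1 else (e ⟨0, hkp0⟩).1 with hPdef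
  have hPS : ∀ i, P i ∈ A ∧ dataOf (P i) = d := by
    intro i
    rw [hPdef]
    by_cases h : i < cardSucc κ
    · simp only [dif_pos h]
      exact (e ⟨i, h⟩).2
    · simp only [dif_neg h]
      exact (e ⟨0, hkp0⟩).2
  have hPinj : ∀ i, i < cardSucc κ → ∀ j, j < cardSucc κ → i ≠ j → P i ≠ P j := by
    intro i hi j hj hij hPeq
    rw [hPdef] at hPeq
    simp only [dif_pos hi, dif_pos hj] at hPeq
    have := e.injective (Subtype.ext hPeq)
    exact hij (congrArg Subtype.val this)
  have hdata : ∀ i j, dataOf (P i) = dataOf (P j) := fun i j =>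
    (hPS i).2.trans (hPS j).2.symm
  have hlvl : ∀ i, (P i).t.lvl (P i).top = (P 0).t.lvl (P 0).top := fun i =>
    lvl_eq_of_data (hdata 0 i)
  have hD : Cardinal.mk ↥((P 0).t.lvl (P 0).top) < LL κ := (P 0).small (P 0).top
  refine no_big_misaligned hκ ((P 0).t.lvl (P 0).top) hD (fun i => (P i).h) ?_ ?_ ?_
  · intro i hi x hx
    exact (P i).h_lt x ((hlvl i).symm ▸ hx)
  · intro i hi x hx y hy hxy
    exact (P i).h_inj x ((hlvl i).symm ▸ hx) y ((hlvl i).symm ▸ hy) hxy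
  · intro i hi j hj hij
    by_contra hno
    push_neg at hno
    obtain ⟨h1, h2, h3, h4⟩ := dataOf_eq_spec (hdata i j)
    have halign : ∀ x ∈ (P i).t.lvl (P i).top, ∀ y ∈ (P i).t.lvl (P i).top,
        (P i).h x = (P j).h y → x = y := by
      intro x hx y hy hxy
      by_contra hne
      exact hno x ((hlvl i) ▸ hx) y ((hlvl i) ▸ hy) hne hxy
    obtain ⟨r, hr1, hr2⟩ := compat_of_aligned hκ (P i) (P j) h1 h2 h3 h4 halign
    exact hA (P i) (hPS i).1 (P j) (hPS j).1 (hPinj i hi j hj hij) ⟨r, hr1, hr2⟩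

end Stmt5
/-- If `κ` is inaccessible and `2^{<κ} = κ`, then `K_κ` is
`κ⁺`-cc: every antichain has size at most `κ`. -/
theorem stmt_5 (κ : Ordinal.{0}) (hκ : InaccOrd κ)
    (hpow : ∀ μ : Cardinal.{0}, μ < κ.card → (2 : Cardinal.{0}) ^ μ ≤ κ.card) :
    ∀ A : Set (KCond κ),
      (∀ p ∈ A, ∀ q ∈ A, p ≠ q → ¬ ∃ r : KCond κ, KLE κ r p ∧ KLE κ r q) →
      Cardinal.mk A ≤ Cardinal.lift.{1} κ.card := by
  intro A hA
  classical
  have haleph : Cardinal.aleph0.{1} ≤ Stmt5.LL κ := Stmt5.aleph0_le_LL hκ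
  have hmulLL : Stmt5.LL κ * Stmt5.LL κ = Stmt5.LL κ := Cardinal.mul_eq_self haleph
  have hIio : Cardinal.mk ↥(Set.Iio κ) = Stmt5.LL κ := Ordinal.mk_Iio_ordinal κ
  have hprodIio : Cardinal.mk ↥((Set.Iio κ) ×ˢ (Set.Iio κ)) = Stmt5.LL κ := by
    rw [Cardinal.mk_congr (Equiv.Set.prod (Set.Iio κ) (Set.Iio κ)), Cardinal.mk_prod]
    simp only [Cardinal.lift_id]
    rw [hIio, hmulLL]
  -- the class of possible data values
  set Good : Set (Ordinal.{0} × Set Ordinal.{0} ×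
      Set (Ordinal.{0} × Ordinal.{0}) × Set (Ordinal.{0} × Ordinal.{0})) :=
    {dg | dg.1 < κ ∧ (dg.2.1 ⊆ Set.Iio κ ∧ Cardinal.mk ↥dg.2.1 < Stmt5.LL κ) ∧
      (dg.2.2.1 ⊆ (Set.Iio κ) ×ˢ (Set.Iio κ) ∧ Cardinal.mk ↥dg.2.2.1 < Stmt5.LL κ) ∧
      (dg.2.2.2 ⊆ (Set.Iio κ) ×ˢ (Set.Iio κ) ∧ Cardinal.mk ↥dg.2.2.2 < Stmt5.LL κ)} with hGdef
  have hmemG : ∀ p : KCond κ, Stmt5.dataOf p ∈ Good := by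
    intro p
    have hnode := Stmt5.node_small hκ p
    refine ⟨p.top_lt, ⟨fun x hx => p.node_sub hx, hnode⟩, ⟨?_, ?_⟩, ⟨?_, ?_⟩⟩
    · rintro z hz
      exact ⟨p.node_sub (p.t.lt_mem hz).1, p.node_sub (p.t.lt_mem hz).2⟩
    · have hinj : Function.Injective
          (fun z : ↥{z : Ordinal.{0} × Ordinal.{0} | p.t.lt z.1 z.2} =>
            ((⟨z.1.1, (p.t.lt_mem z.2).1⟩ : ↥p.t.node),
             (⟨z.1.2, (p.t.lt_mem z.2).2⟩ : ↥p.t.node))) := by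
        rintro ⟨⟨a1, a2⟩, ha⟩ ⟨⟨b1, b2⟩, hb⟩ h
        have e1 : a1 = b1 := congrArg (fun w => w.1.1) h
        have e2 : a2 = b2 := congrArg (fun w => w.2.1) h
        apply Subtype.ext
        simp [e1, e2]
      refine lt_of_le_of_lt (Cardinal.mk_le_of_injective hinj) ?_
      rw [Cardinal.mk_prod]
      simp only [Cardinal.lift_id]
      exact Cardinal.mul_lt_of_lt haleph hnode hnode
    · rintro z ⟨hz1, hz2⟩
      refine ⟨p.node_sub hz1, ?_⟩
      rw [← hz2]
      exact lt_of_le_of_lt (p.level_le z.1 hz1) p.top_lt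
    · have hinj : Function.Injective
          (fun z : ↥{z : Ordinal.{0} × Ordinal.{0} |
              z.1 ∈ p.t.node ∧ p.t.level z.1 = z.2} =>
            (⟨z.1.1, z.2.1⟩ : ↥p.t.node)) := by
        rintro ⟨⟨a1, a2⟩, ha⟩ ⟨⟨b1, b2⟩, hb⟩ h
        have e1 : a1 = b1 := congrArg Subtype.val h
        have ha2 : p.t.level a1 = a2 := ha.2
        have hb2 : p.t.level b1 = b2 := hb.2
        have e2 : a2 = b2 := by rw [← ha2, ← hb2, e1]
        apply Subtype.ext
        simp [e1, e2]
      exact lt_of_le_of_lt (Cardinal.mk_le_of_injective hinj) hnode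
  -- cardinality of Good
  have hN : Cardinal.mk {s : Set Ordinal.{0} // s ⊆ Set.Iio κ ∧
      Cardinal.mk ↥s < Stmt5.LL κ} ≤ Stmt5.LL κ :=
    Stmt5.mk_small_subsets hκ (Set.Iio κ) hIio.le
  have hL2 : Cardinal.mk {s : Set (Ordinal.{0} × Ordinal.{0}) //
      s ⊆ (Set.Iio κ) ×ˢ (Set.Iio κ) ∧ Cardinal.mk ↥s < Stmt5.LL κ} ≤ Stmt5.LL κ :=
    Stmt5.mk_small_subsets hκ ((Set.Iio κ) ×ˢ (Set.Iio κ)) hprodIio.le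
  have hGoodLL : Cardinal.mk ↥Good ≤ Stmt5.LL κ := by
    have hinj : Function.Injective (fun dg : ↥Good =>
        ((⟨dg.1.1, dg.2.1⟩ : ↥(Set.Iio κ)),
         (⟨dg.1.2.1, dg.2.2.1⟩ : {s : Set Ordinal.{0} // s ⊆ Set.Iio κ ∧
            Cardinal.mk ↥s < Stmt5.LL κ}),
         (⟨dg.1.2.2.1, dg.2.2.2.1⟩ : {s : Set (Ordinal.{0} × Ordinal.{0}) //
            s ⊆ (Set.Iio κ) ×ˢ (Set.Iio κ) ∧ Cardinal.mk ↥s < Stmt5.LL κ}),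
         (⟨dg.1.2.2.2, dg.2.2.2.2⟩ : {s : Set (Ordinal.{0} × Ordinal.{0}) //
            s ⊆ (Set.Iio κ) ×ˢ (Set.Iio κ) ∧ Cardinal.mk ↥s < Stmt5.LL κ}))) := by
      intro x y h
      have e1 : x.1.1 = y.1.1 := congrArg (fun w => w.1.1) h
      have e2 : x.1.2.1 = y.1.2.1 := congrArg (fun w => w.2.1.1) h
      have e3 : x.1.2.2.1 = y.1.2.2.1 := congrArg (fun w => w.2.2.1.1) h
      have e4 : x.1.2.2.2 = y.1.2.2.2 := congrArg (fun w => w.2.2.2.1) h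
      apply Subtype.ext
      exact Prod.ext e1 (Prod.ext e2 (Prod.ext e3 e4))
    refine le_trans (Cardinal.mk_le_of_injective hinj) ?_
    rw [Cardinal.mk_prod, Cardinal.mk_prod, Cardinal.mk_prod]
    simp only [Cardinal.lift_id]
    refine le_trans (mul_le_mul' hIio.le (mul_le_mul' hN (mul_le_mul' hL2 hL2))) ?_
    rw [hmulLL, hmulLL, hmulLL]
  -- cover A by the fibers of dataOf
  have hcover : A ⊆ ⋃ (dg : ↥Good), {p : KCond κ | p ∈ A ∧ Stmt5.dataOf p = dg.1} := by
    intro p hp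
    exact Set.mem_iUnion.2 ⟨⟨Stmt5.dataOf p, hmemG p⟩, hp, rfl⟩
  have hsup : (⨆ dg : ↥Good, Cardinal.mk
      ↥{p : KCond κ | p ∈ A ∧ Stmt5.dataOf p = dg.1}) ≤ Stmt5.LL κ :=
    ciSup_le' (fun dg => Stmt5.fiber_le hκ A hA dg.1)
  calc Cardinal.mk ↥A ≤ Cardinal.mk
        ↥(⋃ (dg : ↥Good), {p : KCond κ | p ∈ A ∧ Stmt5.dataOf p = dg.1}) :=
        Cardinal.mk_le_mk_of_subset hcover
    _ ≤ Cardinal.mk ↥Good * ⨆ dg : ↥Good, Cardinal.mk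
        ↥{p : KCond κ | p ∈ A ∧ Stmt5.dataOf p = dg.1} := Cardinal.mk_iUnion_le _
    _ ≤ Stmt5.LL κ * Stmt5.LL κ := mul_le_mul' hGoodLL hsup
    _ = Stmt5.LL κ := hmulLL

end
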